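/- Let X be an integrable real-valued random variable on a probability space (Ω, F, P) and β ∈ (0,1). Then the infimum defining CVaR_β(X) is attained at z = VaR_β(X); that is, CVaR_β(X) = VaR_β(X) + (1/β)·E[max(X − VaR_β(X), 0)]. -/

import Mathlib

open MeasureTheory Set
open scoped ENNReal

/-- Value-at-Risk at level `β`: `VaR_β(X) := inf {z : P(X ≤ z) ≥ 1 - β}`. -/
noncomputable def VaR {Ω : Type*} [MeasurableSpace Ω] (P : Measure Ω) (β : ℝ) (X : Ω → ℝ) : ℝ :=
  sInf {z : ℝ | ENNReal.ofReal (1 - β) ≤ P {ω | X ω ≤ z}}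

/-- Conditional Value-at-Risk at level `β`: `CVaR_β(X) := inf_z E[z + (X - z)⁺ / β]`. -/
noncomputable def CVaR {Ω : Type*} [MeasurableSpace Ω] (P : Measure Ω) (β : ℝ) (X : Ω → ℝ) : ℝ :=
  ⨅ z : ℝ, (z + (∫ ω, max (X ω - z) 0 ∂P) / β)

namespace CVaRAux

variable {Ω : Type*} [MeasurableSpace Ω] (P : Measure Ω) [IsProbabilityMeasure P]
  (X : Ω → ℝ)

lemma gmeas : Measurable (fun t : ℝ => P {ω | t < X ω}) :=
  Antitone.measurable (fun _ _ hst => measure_mono (fun _ h => lt_of_le_of_lt hst h))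

/-- Layer-cake representation of the expected positive part. -/
lemma layer (hX : Measurable X) (hint : Integrable X P) (z : ℝ) :
    ∫ ω, max (X ω - z) 0 ∂P = (∫⁻ t in Ioi z, P {ω | t < X ω}).toReal := by
  have hmax : Integrable (fun ω => max (X ω - z) 0) P :=
    (hint.sub (integrable_const z)).pos_part
  have hrw := integral_eq_lintegral_of_nonneg_ae (μ := P) (f := fun ω => max (X ω - z) 0)
    (Filter.Eventually.of_forall fun ω => le_max_right _ _) hmax.aestronglyMeasurable
  rw [hrw]
  congr 1
  have hlc := lintegral_eq_lintegral_meas_lt (f := fun ω => max (X ω - z) 0) P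
    (Filter.Eventually.of_forall fun ω => le_max_right _ _)
    ((hX.sub measurable_const).max measurable_const).aemeasurable
  rw [hlc]
  have h1 : ∀ t ∈ Ioi (0 : ℝ),
      P {ω | t < max (X ω - z) 0} = (fun s => P {ω | s < X ω}) (t + z) := by
    intro t ht
    simp only [mem_Ioi] at ht
    congr 1
    ext ω
    simp only [mem_setOf_eq, lt_max_iff]
    constructor
    · rintro (h | h)
      · linarith
      · linarith
    · intro h; left; linarith
  rw [setLIntegral_congr_fun measurableSet_Ioi h1]
  have hpre : (fun t : ℝ => t + z) ⁻¹' (Ioi z) = Ioi 0 := by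
    ext t; simp [mem_Ioi]
  have := (measurePreserving_add_right volume z).setLIntegral_comp_preimage
    (measurableSet_Ioi (a := z)) (gmeas P X)
  rw [hpre] at this
  exact this

variable {β : ℝ}

lemma S_up {z z' : ℝ} (hz : z ≤ z')
    (h : z ∈ {z : ℝ | ENNReal.ofReal (1 - β) ≤ P {ω | X ω ≤ z}}) :
    z' ∈ {z : ℝ | ENNReal.ofReal (1 - β) ≤ P {ω | X ω ≤ z}} :=
  le_trans h (measure_mono fun ω hω => le_trans hω hz)

lemma S_nonempty (hX : Measurable X) (hβ : β ∈ Set.Ioo (0 : ℝ) 1) :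
    ({z : ℝ | ENNReal.ofReal (1 - β) ≤ P {ω | X ω ≤ z}}).Nonempty := by
  have hmono : Monotone (fun n : ℕ => {ω | X ω ≤ (n : ℝ)}) :=
    by
    intro n m hnm ω h
    simp only [mem_setOf_eq] at *
    exact le_trans h (Nat.cast_le.mpr hnm)
  have hU : (⋃ n : ℕ, {ω | X ω ≤ (n : ℝ)}) = univ := by
    ext ω
    simp only [mem_iUnion, mem_setOf_eq, mem_univ, iff_true]
    obtain ⟨n, hn⟩ := exists_nat_ge (X ω)
    exact ⟨n, hn⟩
  have htend := tendsto_measure_iUnion_atTop (μ := P) hmono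
  rw [hU, measure_univ] at htend
  have hlt : ENNReal.ofReal (1 - β) < 1 := by
    rw [← ENNReal.ofReal_one]
    exact ENNReal.ofReal_lt_ofReal_iff_of_nonneg (by linarith [hβ.2]) |>.mpr (by linarith [hβ.1])
  obtain ⟨n, hn⟩ := (htend.eventually (eventually_gt_nhds hlt)).exists
  exact ⟨n, le_of_lt hn⟩

lemma S_bddBelow (hX : Measurable X) (hβ : β ∈ Set.Ioo (0 : ℝ) 1) :
    BddBelow {z : ℝ | ENNReal.ofReal (1 - β) ≤ P {ω | X ω ≤ z}} := by
  have hanti : Antitone (fun n : ℕ => {ω | X ω ≤ -(n : ℝ)}) :=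
    by
    intro n m hnm ω h
    simp only [mem_setOf_eq] at *
    exact le_trans h (neg_le_neg (Nat.cast_le.mpr hnm))
  have hI : (⋂ n : ℕ, {ω | X ω ≤ -(n : ℝ)}) = ∅ := by
    ext ω
    simp only [mem_iInter, mem_setOf_eq, mem_empty_iff_false, iff_false, not_forall, not_le]
    obtain ⟨n, hn⟩ := exists_nat_gt (-X ω)
    exact ⟨n, by linarith⟩
  have htend := tendsto_measure_iInter_atTop (μ := P)
    (fun n => (measurableSet_le hX measurable_const).nullMeasurableSet) hanti
    ⟨0, measure_ne_top _ _⟩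
  rw [hI, measure_empty] at htend
  have hpos : (0 : ℝ≥0∞) < ENNReal.ofReal (1 - β) := by
    exact ENNReal.ofReal_pos.mpr (by linarith [hβ.2])
  obtain ⟨n, hn⟩ := (htend.eventually (eventually_lt_nhds hpos)).exists
  refine ⟨-(n : ℝ), fun s hs => ?_⟩
  by_contra h
  push_neg at h
  exact absurd (S_up P X (le_of_lt h) hs) (by simpa using not_le.mpr hn)

lemma VaR_mem (hX : Measurable X) (hβ : β ∈ Set.Ioo (0 : ℝ) 1) :
    ENNReal.ofReal (1 - β) ≤ P {ω | X ω ≤ VaR P β X} := by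
  set S := {z : ℝ | ENNReal.ofReal (1 - β) ≤ P {ω | X ω ≤ z}} with hS
  set v := VaR P β X with hv
  have hiInter : {ω | X ω ≤ v} = ⋂ n : ℕ, {ω | X ω ≤ v + 1 / ((n : ℝ) + 1)} := by
    ext ω
    simp only [mem_iInter, mem_setOf_eq]
    constructor
    · intro h n
      have : (0 : ℝ) < 1 / ((n : ℝ) + 1) := by positivity
      linarith
    · intro h
      by_contra hc
      push_neg at hc
      obtain ⟨n, hn⟩ := exists_nat_one_div_lt (sub_pos.mpr hc)
      have := h n
      linarith
    -- done
  have hanti : Antitone (fun n : ℕ => {ω | X ω ≤ v + 1 / ((n : ℝ) + 1)}) := by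
    intro n m hnm ω h
    simp only [mem_setOf_eq] at *
    have hc : ((n : ℝ)) + 1 ≤ ((m : ℝ)) + 1 := by exact_mod_cast Nat.succ_le_succ hnm
    have : 1 / ((m : ℝ) + 1) ≤ 1 / ((n : ℝ) + 1) :=
      one_div_le_one_div_of_le (by positivity) hc
    linarith
  have key : ∀ n : ℕ, ENNReal.ofReal (1 - β) ≤ P {ω | X ω ≤ v + 1 / ((n : ℝ) + 1)} := by
    intro n
    have hlt : v < v + 1 / ((n : ℝ) + 1) := by
      have : (0 : ℝ) < 1 / ((n : ℝ) + 1) := by positivity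
      linarith
    obtain ⟨s, hsS, hs⟩ := exists_lt_of_csInf_lt (S_nonempty P X hX hβ) hlt
    exact S_up P X (le_of_lt hs) hsS
  rw [hiInter, Antitone.measure_iInter hanti
    (fun n => (measurableSet_le hX measurable_const).nullMeasurableSet)
    ⟨0, measure_ne_top _ _⟩]
  exact le_iInf key

lemma g_ge (hX : Measurable X) (hβ : β ∈ Set.Ioo (0 : ℝ) 1) {t : ℝ} (ht : t < VaR P β X) :
    ENNReal.ofReal β ≤ P {ω | t < X ω} := by
  have hnot : ¬ ENNReal.ofReal (1 - β) ≤ P {ω | X ω ≤ t} := by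
    intro h
    exact absurd (csInf_le (S_bddBelow P X hX hβ) h) (not_le.mpr ht)
  push_neg at hnot
  have hcompl : {ω | t < X ω} = {ω | X ω ≤ t}ᶜ := by ext ω; simp [not_le]
  have hms : MeasurableSet {ω | X ω ≤ t} := measurableSet_le hX measurable_const
  rw [hcompl, measure_compl hms (measure_ne_top _ _), measure_univ]
  calc ENNReal.ofReal β = ENNReal.ofReal (1 - (1 - β)) := by norm_num
    _ = ENNReal.ofReal 1 - ENNReal.ofReal (1 - β) :=
        ENNReal.ofReal_sub _ (by linarith [hβ.2])
    _ = 1 - ENNReal.ofReal (1 - β) := by rw [ENNReal.ofReal_one]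
    _ ≤ 1 - P {ω | X ω ≤ t} := tsub_le_tsub_left (le_of_lt hnot) _

lemma g_le (hX : Measurable X) (hβ : β ∈ Set.Ioo (0 : ℝ) 1) {t : ℝ} (ht : VaR P β X ≤ t) :
    P {ω | t < X ω} ≤ ENNReal.ofReal β := by
  have h1 : ENNReal.ofReal (1 - β) ≤ P {ω | X ω ≤ t} :=
    le_trans (VaR_mem P X hX hβ) (measure_mono fun ω hω => le_trans hω ht)
  have hcompl : {ω | t < X ω} = {ω | X ω ≤ t}ᶜ := by ext ω; simp [not_le]
  have hms : MeasurableSet {ω | X ω ≤ t} := measurableSet_le hX measurable_const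
  rw [hcompl, measure_compl hms (measure_ne_top _ _), measure_univ]
  calc 1 - P {ω | X ω ≤ t} ≤ 1 - ENNReal.ofReal (1 - β) := tsub_le_tsub_left h1 _
    _ = ENNReal.ofReal 1 - ENNReal.ofReal (1 - β) := by rw [ENNReal.ofReal_one]
    _ = ENNReal.ofReal (1 - (1 - β)) := (ENNReal.ofReal_sub _ (by linarith [hβ.2])).symm
    _ = ENNReal.ofReal β := by norm_num

lemma I_lt_top (hX : Measurable X) (hint : Integrable X P) (z : ℝ) :
    (∫⁻ t in Ioi z, P {ω | t < X ω}) < ⊤ := by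
  have hmax : Integrable (fun ω => max (X ω - z) 0) P :=
    (hint.sub (integrable_const z)).pos_part
  have h := (hasFiniteIntegral_iff_ofReal
    (Filter.Eventually.of_forall fun ω => le_max_right _ _)).mp hmax.hasFiniteIntegral
  have heq : ∫⁻ ω, ENNReal.ofReal (max (X ω - z) 0) ∂P = ∫⁻ t in Ioi z, P {ω | t < X ω} := by
    have h2 := layer P X hX hint z
    have hlc := lintegral_eq_lintegral_meas_lt (f := fun ω => max (X ω - z) 0) P
      (Filter.Eventually.of_forall fun ω => le_max_right _ _)
      ((hX.sub measurable_const).max measurable_const).aemeasurable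
    rw [hlc]
    have h1 : ∀ t ∈ Ioi (0 : ℝ),
        P {ω | t < max (X ω - z) 0} = (fun s => P {ω | s < X ω}) (t + z) := by
      intro t ht
      simp only [mem_Ioi] at ht
      congr 1
      ext ω
      simp only [mem_setOf_eq, lt_max_iff]
      constructor
      · rintro (h | h)
        · linarith
        · linarith
      · intro h; left; linarith
    rw [setLIntegral_congr_fun measurableSet_Ioi h1]
    have hpre : (fun t : ℝ => t + z) ⁻¹' (Ioi z) = Ioi 0 := by
      ext t; simp [mem_Ioi]
    have := (measurePreserving_add_right volume z).setLIntegral_comp_preimage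
      (measurableSet_Ioi (a := z)) (gmeas P X)
    rw [hpre] at this
    exact this
  rw [← heq]
  exact h

/-- The key inequality : the objective at `VaR` is minimal. -/
lemma key_ineq (hX : Measurable X) (hint : Integrable X P) (hβ : β ∈ Set.Ioo (0 : ℝ) 1)
    (z : ℝ) :
    VaR P β X + (∫ ω, max (X ω - VaR P β X) 0 ∂P) / β ≤
      z + (∫ ω, max (X ω - z) 0 ∂P) / β := by
  set v := VaR P β X with hv
  set g := fun t : ℝ => P {ω | t < X ω} with hg
  rw [layer P X hX hint, layer P X hX hint]
  have hIv := I_lt_top P X hX hint v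
  have hIz := I_lt_top P X hX hint z
  rcases le_total v z with hvz | hvz
  · -- v ≤ z : I v = J + I z with J ≤ β (z - v)
    have hsplit : (∫⁻ t in Ioi v, g t) = (∫⁻ t in Ioc v z, g t) + ∫⁻ t in Ioi z, g t := by
      rw [← lintegral_union measurableSet_Ioi (Ioc_disjoint_Ioi le_rfl),
        Ioc_union_Ioi_eq_Ioi hvz]
    have hJle : (∫⁻ t in Ioc v z, g t) ≤ ENNReal.ofReal β * ENNReal.ofReal (z - v) := by
      calc (∫⁻ t in Ioc v z, g t) ≤ ∫⁻ _ in Ioc v z, ENNReal.ofReal β := by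
            apply setLIntegral_mono measurable_const
            intro t ht
            exact g_le P X hX hβ (le_of_lt ht.1)
        _ = ENNReal.ofReal β * volume (Ioc v z) := setLIntegral_const _ _
        _ = ENNReal.ofReal β * ENNReal.ofReal (z - v) := by rw [Real.volume_Ioc]
    have hJfin : (∫⁻ t in Ioc v z, g t) ≠ ⊤ :=
      ne_top_of_le_ne_top (by finiteness) hJle
    have htoReal : (∫⁻ t in Ioi v, g t).toReal =
        (∫⁻ t in Ioc v z, g t).toReal + (∫⁻ t in Ioi z, g t).toReal := by
      rw [hsplit, ENNReal.toReal_add hJfin hIz.ne]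
    have hJR : (∫⁻ t in Ioc v z, g t).toReal ≤ β * (z - v) := by
      have := ENNReal.toReal_mono (by finiteness) hJle
      rwa [ENNReal.toReal_mul, ENNReal.toReal_ofReal hβ.1.le,
        ENNReal.toReal_ofReal (by linarith)] at this
    rw [htoReal]
    have hβpos := hβ.1
    have h1 : ((∫⁻ t in Ioc v z, g t).toReal + (∫⁻ t in Ioi z, g t).toReal) / β
        = (∫⁻ t in Ioc v z, g t).toReal / β + (∫⁻ t in Ioi z, g t).toReal / β := by
      ring
    rw [h1]
    have h2 : (∫⁻ t in Ioc v z, g t).toReal / β ≤ z - v := by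
      rw [div_le_iff₀ hβpos]
      linarith
    linarith
  · -- z ≤ v : I z = J + I v with J ≥ β (v - z)
    have hsplit : (∫⁻ t in Ioi z, g t) = (∫⁻ t in Ioc z v, g t) + ∫⁻ t in Ioi v, g t := by
      rw [← lintegral_union measurableSet_Ioi (Ioc_disjoint_Ioi le_rfl),
        Ioc_union_Ioi_eq_Ioi hvz]
    have hJge : ENNReal.ofReal β * ENNReal.ofReal (v - z) ≤ ∫⁻ t in Ioc z v, g t := by
      calc ENNReal.ofReal β * ENNReal.ofReal (v - z)
          = ENNReal.ofReal β * volume (Ioo z v) := by rw [Real.volume_Ioo]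
        _ = ∫⁻ _ in Ioo z v, ENNReal.ofReal β := (setLIntegral_const _ _).symm
        _ ≤ ∫⁻ t in Ioo z v, g t := by
            apply setLIntegral_mono (gmeas P X)
            intro t ht
            exact g_ge P X hX hβ ht.2
        _ ≤ ∫⁻ t in Ioc z v, g t := lintegral_mono_set Ioo_subset_Ioc_self
    have hJfin : (∫⁻ t in Ioc z v, g t) ≠ ⊤ := by
      intro h
      rw [hsplit, h] at hIz
      simp at hIz
    have htoReal : (∫⁻ t in Ioi z, g t).toReal =
        (∫⁻ t in Ioc z v, g t).toReal + (∫⁻ t in Ioi v, g t).toReal := by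
      rw [hsplit, ENNReal.toReal_add hJfin hIv.ne]
    have hJR : β * (v - z) ≤ (∫⁻ t in Ioc z v, g t).toReal := by
      have := ENNReal.toReal_mono hJfin hJge
      rwa [ENNReal.toReal_mul, ENNReal.toReal_ofReal hβ.1.le,
        ENNReal.toReal_ofReal (by linarith)] at this
    rw [htoReal]
    have hβpos := hβ.1
    have h1 : ((∫⁻ t in Ioc z v, g t).toReal + (∫⁻ t in Ioi v, g t).toReal) / β
        = (∫⁻ t in Ioc z v, g t).toReal / β + (∫⁻ t in Ioi v, g t).toReal / β := by
      ring
    rw [h1]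
    have h2 : v - z ≤ (∫⁻ t in Ioc z v, g t).toReal / β := by
      rw [le_div_iff₀ hβpos]
      linarith
    linarith

end CVaRAux

/-- The infimum defining `CVaR_β(X)` is attained at `z = VaR_β(X)`:
`CVaR_β(X) = VaR_β(X) + (1/β) E[(X - VaR_β(X))⁺]`. -/
theorem stmt_7 {Ω : Type*} [MeasurableSpace Ω] (P : Measure Ω) [IsProbabilityMeasure P]
    (X : Ω → ℝ) (hX : Measurable X) (hint : Integrable X P)
    {β : ℝ} (hβ : β ∈ Set.Ioo (0 : ℝ) 1) :
    CVaR P β X = VaR P β X + (1 / β) * ∫ ω, max (X ω - VaR P β X) 0 ∂P := by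
  have key := CVaRAux.key_ineq P X hX hint hβ
  have hmain : CVaR P β X = VaR P β X + (∫ ω, max (X ω - VaR P β X) 0 ∂P) / β := by
    refine le_antisymm ?_ ?_
    · refine ciInf_le ⟨VaR P β X + (∫ ω, max (X ω - VaR P β X) 0 ∂P) / β, ?_⟩ (VaR P β X)
      rintro x ⟨z, rfl⟩
      exact key z
    · exact le_ciInf key
  rw [hmain]
  ring
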